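/- The Klein four-group C₂ × C₂ is the only non-trivial finite group G such that every automorphism of the enhanced power graph of G is a group automorphism of G (i.e., Aut(G) = Aut(G_e(G)) as permutation groups on G). -/

import Mathlib

open SimpleGraph

/-- The enhanced power graph of a group. -/
def enhancedPowerGraph (G : Type*) [Group G] : SimpleGraph G where
  Adj x y := x ≠ y ∧ ∃ z : G, x ∈ Subgroup.zpowers z ∧ y ∈ Subgroup.zpowers z
  symm := ⟨by rintro x y ⟨h, z, hx, hy⟩; exact ⟨h.symm, z, hy, hx⟩⟩
  loopless := ⟨by rintro x ⟨h, -⟩; exact h rfl⟩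

/-- The (undirected) power graph of a group. -/
def powerGraph (G : Type*) [Group G] : SimpleGraph G where
  Adj x y := x ≠ y ∧ (x ∈ Subgroup.zpowers y ∨ y ∈ Subgroup.zpowers x)
  symm := ⟨by rintro x y ⟨h, hz⟩; exact ⟨h.symm, hz.symm⟩⟩
  loopless := ⟨by rintro x ⟨h, -⟩; exact h rfl⟩

/-- The strong product of two simple graphs. -/
def strongProd {α β : Type*} (Γ : SimpleGraph α) (Δ : SimpleGraph β) :
    SimpleGraph (α × β) where
  Adj p q := (p.1 = q.1 ∧ Δ.Adj p.2 q.2) ∨ (Γ.Adj p.1 q.1 ∧ p.2 = q.2) ∨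
    (Γ.Adj p.1 q.1 ∧ Δ.Adj p.2 q.2)
  symm := by
    constructor
    rintro ⟨a, b⟩ ⟨c, d⟩ (⟨h1, h2⟩ | ⟨h1, h2⟩ | ⟨h1, h2⟩)
    · exact Or.inl ⟨h1.symm, h2.symm⟩
    · exact Or.inr (Or.inl ⟨h1.symm, h2.symm⟩)
    · exact Or.inr (Or.inr ⟨h1.symm, h2.symm⟩)
  loopless := by
    constructor
    rintro ⟨a, b⟩ (⟨-, h⟩ | ⟨h, -⟩ | ⟨h, -⟩) <;> exact h.ne rfl

/-- The automorphism group of a simple graph, as a subgroup of permutations. -/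
def graphAut {V : Type*} (Γ : SimpleGraph V) : Subgroup (Equiv.Perm V) where
  carrier := {σ | ∀ x y, Γ.Adj (σ x) (σ y) ↔ Γ.Adj x y}
  one_mem' := fun _ _ => Iff.rfl
  mul_mem' := by
    intro σ τ hσ hτ x y
    simpa [Equiv.Perm.mul_apply] using (hσ (τ x) (τ y)).trans (hτ x y)
  inv_mem' := by
    intro σ hσ x y
    simpa using (hσ (σ⁻¹ x) (σ⁻¹ y)).symm

/-- A subgroup is maximal cyclic if it is maximal among cyclic subgroups. -/
def IsMaxCyclic {G : Type*} [Group G] (C : Subgroup G) : Prop :=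
  Maximal (fun K : Subgroup G => ∃ g : G, K = Subgroup.zpowers g) C

/-- The closed neighborhood of a vertex. -/
def closedNbhd {V : Type*} (Γ : SimpleGraph V) (x : V) : Set V :=
  Γ.neighborSet x ∪ {x}

section Aux

variable {G : Type*} [Group G]

lemma mem_graphAut_iff {σ : Equiv.Perm G} :
    σ ∈ graphAut (enhancedPowerGraph G) ↔
      ∀ x y, (enhancedPowerGraph G).Adj (σ x) (σ y) ↔ (enhancedPowerGraph G).Adj x y :=
  Iff.rfl

lemma adj_iff {x y : G} :
    (enhancedPowerGraph G).Adj x y ↔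
      x ≠ y ∧ ∃ z : G, x ∈ Subgroup.zpowers z ∧ y ∈ Subgroup.zpowers z := Iff.rfl

variable [DecidableEq G]

/-- swapping x and x⁻¹ preserves zpowers membership -/
lemma swap_inv_zpowers (x : G) (u z : G) :
    Equiv.swap x x⁻¹ u ∈ Subgroup.zpowers z ↔ u ∈ Subgroup.zpowers z := by
  rcases eq_or_ne u x with rfl | hx
  · rw [Equiv.swap_apply_left, Subgroup.inv_mem_iff]
  · rcases eq_or_ne u x⁻¹ with rfl | hx'
    · rw [Equiv.swap_apply_right]
      exact (Subgroup.inv_mem_iff _).symm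
    · rw [Equiv.swap_apply_of_ne_of_ne hx hx']

lemma swap_inv_mem_graphAut (x : G) :
    Equiv.swap x x⁻¹ ∈ graphAut (enhancedPowerGraph G) := by
  intro u v
  constructor
  · rintro ⟨hne, z, hu, hv⟩
    exact ⟨fun h => hne (by rw [h]), z, (swap_inv_zpowers x u z).mp hu,
      (swap_inv_zpowers x v z).mp hv⟩
  · rintro ⟨hne, z, hu, hv⟩
    exact ⟨fun h => hne ((Equiv.swap x x⁻¹).injective h), z,
      (swap_inv_zpowers x u z).mpr hu, (swap_inv_zpowers x v z).mpr hv⟩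

/-- in an exponent-2 group the enhanced power graph is a star -/
lemma adj_iff_of_exp_two (h2 : ∀ g : G, g * g = 1) {u v : G} :
    (enhancedPowerGraph G).Adj u v ↔ u ≠ v ∧ (u = 1 ∨ v = 1) := by
  constructor
  · rintro ⟨hne, z, hu, hv⟩
    have key : ∀ w : G, w ∈ Subgroup.zpowers z → w = 1 ∨ w = z := by
      intro w hw
      obtain ⟨n, rfl⟩ := Subgroup.mem_zpowers_iff.mp hw
      have hz2 : ∀ w : G, w ^ (2 : ℤ) = 1 := fun w => by
        rw [show (2:ℤ) = 1 + 1 by ring, zpow_add, zpow_one]; exact h2 w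
      rcases Int.even_or_odd n with ⟨k, hk⟩ | ⟨k, hk⟩
      · left; rw [hk, show k + k = k * 2 by ring, zpow_mul, hz2]
      · right; rw [hk, zpow_add, show (2:ℤ)*k = k*2 by ring, zpow_mul, hz2,
          one_mul, zpow_one]
    refine ⟨hne, ?_⟩
    rcases key u hu with rfl | rfl
    · exact Or.inl rfl
    · rcases key v hv with rfl | rfl
      · exact Or.inr rfl
      · exact absurd rfl hne
  · rintro ⟨hne, h1 | h1⟩
    · exact ⟨hne, v, h1 ▸ Subgroup.one_mem _, Subgroup.mem_zpowers v⟩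
    · exact ⟨hne, u, Subgroup.mem_zpowers u, h1 ▸ Subgroup.one_mem _⟩

lemma fix_one_mem_graphAut (h2 : ∀ g : G, g * g = 1) {σ : Equiv.Perm G}
    (h1 : σ 1 = 1) : σ ∈ graphAut (enhancedPowerGraph G) := by
  intro u v
  rw [adj_iff_of_exp_two h2, adj_iff_of_exp_two h2]
  have hone : ∀ w : G, σ w = 1 ↔ w = 1 := by
    intro w
    constructor
    · intro h; exact σ.injective (h.trans h1.symm)
    · rintro rfl; exact h1
  rw [hone, hone, σ.injective.ne_iff]

lemma mulEquiv_mem_graphAut (f : G ≃* G) {σ : Equiv.Perm G}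
    (hσ : ∀ g, σ g = f g) : σ ∈ graphAut (enhancedPowerGraph G) := by
  have key : ∀ (w z : G), w ∈ Subgroup.zpowers z ↔ f w ∈ Subgroup.zpowers (f z) := by
    intro w z
    rw [Subgroup.mem_zpowers_iff, Subgroup.mem_zpowers_iff]
    constructor
    · rintro ⟨k, rfl⟩; exact ⟨k, (map_zpow f z k).symm⟩
    · rintro ⟨k, hk⟩; exact ⟨k, f.injective (by rw [map_zpow]; exact hk)⟩
  intro u v
  rw [adj_iff, adj_iff, hσ u, hσ v, f.injective.ne_iff]
  constructor
  · rintro ⟨hne, z, hu, hv⟩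
    refine ⟨hne, f.symm z, ?_, ?_⟩
    · rw [key _ (f.symm z), f.apply_symm_apply]; exact hu
    · rw [key _ (f.symm z), f.apply_symm_apply]; exact hv
  · rintro ⟨hne, z, hu, hv⟩
    exact ⟨hne, f z, (key u z).mp hu, (key v z).mp hv⟩

end Aux

section Aux2

variable {G : Type*} [Group G]

lemma exponent_eq_two_of (h2 : ∀ g : G, g * g = 1) [Nontrivial G] :
    Monoid.exponent G = 2 := by
  have hdvd : Monoid.exponent G ∣ 2 :=
    Monoid.exponent_dvd_of_forall_pow_eq_one (fun g => by rw [pow_two]; exact h2 g)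
  have hne1 : Monoid.exponent G ≠ 1 := by
    intro h
    obtain ⟨a, ha⟩ := exists_ne (1 : G)
    apply ha
    have := Monoid.pow_exponent_eq_one a
    rwa [h, pow_one] at this
  exact (Nat.prime_two.eq_one_or_self_of_dvd _ hdvd).resolve_left hne1

lemma exists_two_ne_one [Fintype G] [DecidableEq G] (h : 3 ≤ Fintype.card G) :
    ∃ a b : G, a ≠ 1 ∧ b ≠ 1 ∧ a ≠ b := by
  have hcard : 2 ≤ ((Finset.univ : Finset G).erase 1).card := by
    rw [Finset.card_erase_of_mem (Finset.mem_univ 1)]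
    have : Fintype.card G = (Finset.univ : Finset G).card := rfl
    omega
  obtain ⟨a, ha, b, hb, hab⟩ := Finset.one_lt_card.mp hcard
  exact ⟨a, b, Finset.ne_of_mem_erase ha, Finset.ne_of_mem_erase hb, hab⟩

end Aux2

theorem stmt_13 {G : Type*} [Group G] [Fintype G] [Nontrivial G] :
    ({σ : Equiv.Perm G | ∃ f : G ≃* G, ∀ g : G, σ g = f g} =
      (graphAut (enhancedPowerGraph G) : Set (Equiv.Perm G))) ↔
    Nonempty (G ≃* Multiplicative (ZMod 2 × ZMod 2)) := by
  classical
  constructor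
  · intro h
    have hsub : ∀ σ ∈ graphAut (enhancedPowerGraph G), ∃ f : G ≃* G, ∀ g : G, σ g = f g := by
      intro σ hσ
      have : σ ∈ {σ : Equiv.Perm G | ∃ f : G ≃* G, ∀ g : G, σ g = f g} := by
        rw [h]; exact hσ
      exact this
    -- Step 1: every element squares to the identity
    have h2 : ∀ x : G, x * x = 1 := by
      intro x
      by_contra hx2
      have hx1 : x ≠ 1 := fun h => hx2 (by rw [h, one_mul])
      have hxinv : x ≠ x⁻¹ := fun h => hx2 (by nth_rewrite 2 [h]; rw [mul_inv_cancel])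
      by_cases hG : ∃ g : G, g ≠ 1 ∧ g ≠ x ∧ g ≠ x⁻¹ ∧ g ≠ x⁻¹ * x⁻¹
      · obtain ⟨g, hg1, hgx, hgxi, hgxx⟩ := hG
        obtain ⟨f, hf⟩ := hsub _ (swap_inv_mem_graphAut x)
        have e1 : f x = x⁻¹ := by rw [← hf, Equiv.swap_apply_left]
        have e2 : f g = g := by rw [← hf, Equiv.swap_apply_of_ne_of_ne hgx hgxi]
        have e3 : f (x * g) = x * g := by
          rw [← hf, Equiv.swap_apply_of_ne_of_ne]
          · intro hxg
            exact hg1 (mul_left_cancel (hxg.trans (mul_one x).symm))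
          · intro hxg
            apply hgxx
            have : g = x⁻¹ * x⁻¹ := by
              rw [← one_mul g, ← inv_mul_cancel x, mul_assoc, hxg]
            exact this
        have hmul := map_mul f x g
        rw [e3, e1, e2] at hmul
        exact hxinv (mul_right_cancel hmul)
      · push_neg at hG
        have hmem : ∀ g : G, g ∈ Subgroup.zpowers x := by
          intro g
          by_cases hg1 : g = 1
          · rw [hg1]; exact Subgroup.one_mem _
          by_cases hgx : g = x
          · rw [hgx]; exact Subgroup.mem_zpowers x
          by_cases hgxi : g = x⁻¹
          · rw [hgxi]; exact Subgroup.inv_mem _ (Subgroup.mem_zpowers x)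
          rw [hG g hg1 hgx hgxi]
          exact Subgroup.mul_mem _ (Subgroup.inv_mem _ (Subgroup.mem_zpowers x))
            (Subgroup.inv_mem _ (Subgroup.mem_zpowers x))
        have hcomplete : Equiv.swap (1 : G) x ∈ graphAut (enhancedPowerGraph G) := by
          intro u v
          constructor
          · rintro ⟨hne, -⟩
            exact ⟨fun huv => hne (congrArg _ huv), x, hmem u, hmem v⟩
          · rintro ⟨hne, -⟩
            exact ⟨fun huv => hne ((Equiv.swap (1 : G) x).injective huv), x, hmem _, hmem _⟩
        obtain ⟨f, hf⟩ := hsub _ hcomplete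
        have : f 1 = x := by rw [← hf, Equiv.swap_apply_left]
        rw [map_one] at this
        exact hx1 this.symm
    have hinv : ∀ a : G, a⁻¹ = a := fun a => inv_eq_of_mul_eq_one_right (h2 a)
    -- Step 2: card ≤ 4
    have hle4 : Fintype.card G ≤ 4 := by
      by_contra hge
      push_neg at hge
      obtain ⟨a, b, ha, hb, hab⟩ := exists_two_ne_one (G := G) (by omega)
      -- find c outside {1, a, b, a*b}
      have hsubne : ¬ (Finset.univ : Finset G) ⊆ ({1, a, b, a * b} : Finset G) := by
        intro hsub
        have hc1 : (Finset.univ : Finset G).card ≤ ({1, a, b, a * b} : Finset G).card :=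
          Finset.card_le_card hsub
        have hc2 : ({1, a, b, a * b} : Finset G).card ≤ 4 := by
          apply le_trans (Finset.card_insert_le _ _)
          apply Nat.succ_le_succ
          apply le_trans (Finset.card_insert_le _ _)
          apply Nat.succ_le_succ
          apply le_trans (Finset.card_insert_le _ _)
          apply Nat.succ_le_succ
          simp
        have : Fintype.card G = (Finset.univ : Finset G).card := rfl
        omega
      obtain ⟨c, -, hc⟩ := Finset.not_subset.mp hsubne
      simp only [Finset.mem_insert, Finset.mem_singleton, not_or] at hc
      obtain ⟨hc1, hca, hcb, hcab⟩ := hc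
      obtain ⟨f, hf⟩ := hsub _ (fix_one_mem_graphAut h2
        (Equiv.swap_apply_of_ne_of_ne (Ne.symm ha) (Ne.symm hb)))
      have e1 : f a = b := by rw [← hf, Equiv.swap_apply_left]
      have e2 : f c = c := by rw [← hf, Equiv.swap_apply_of_ne_of_ne hca hcb]
      have e3 : f (a * c) = a * c := by
        rw [← hf, Equiv.swap_apply_of_ne_of_ne]
        · intro hac
          exact hc1 (mul_left_cancel (hac.trans (mul_one a).symm))
        · intro hac
          apply hcab
          rw [← one_mul c, ← h2 a, mul_assoc, hac]
      have hmul := map_mul f a c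
      rw [e3, e1, e2] at hmul
      exact hab (mul_right_cancel hmul)
    -- Step 3: card ≠ 2
    have hne2 : Fintype.card G ≠ 2 := by
      intro hcard
      obtain ⟨a, ha⟩ := exists_ne (1 : G)
      have huniv : ∀ g : G, g = 1 ∨ g = a := by
        intro g
        by_contra hcon
        push_neg at hcon
        obtain ⟨hg1, hga⟩ := hcon
        have h3 : ({1, a, g} : Finset G).card = 3 := by
          rw [Finset.card_insert_of_notMem (by simp [Ne.symm ha, Ne.symm hg1]),
            Finset.card_insert_of_notMem (by simp [Ne.symm hga]), Finset.card_singleton]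
        have := Finset.card_le_univ ({1, a, g} : Finset G)
        rw [h3] at this
        have : Fintype.card G = (Finset.univ : Finset G).card := rfl
        omega
      have hswap : Equiv.swap (1 : G) a ∈ graphAut (enhancedPowerGraph G) := by
        intro u v
        rw [adj_iff_of_exp_two h2, adj_iff_of_exp_two h2]
        constructor
        · rintro ⟨hne, -⟩
          have huv : u ≠ v := fun huv => hne (congrArg _ huv)
          refine ⟨huv, ?_⟩
          rcases huniv u with rfl | rfl
          · exact Or.inl rfl
          · rcases huniv v with rfl | rfl
            · exact Or.inr rfl
            · exact absurd rfl huv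
        · rintro ⟨hne, -⟩
          have huv : Equiv.swap (1 : G) a u ≠ Equiv.swap (1 : G) a v :=
            fun huv => hne ((Equiv.swap (1 : G) a).injective huv)
          refine ⟨huv, ?_⟩
          rcases huniv (Equiv.swap (1 : G) a u) with h' | h'
          · exact Or.inl h'
          · rcases huniv (Equiv.swap (1 : G) a v) with h'' | h''
            · exact Or.inr h''
            · exact absurd (h'.trans h''.symm) huv
      obtain ⟨f, hf⟩ := hsub _ hswap
      have : f 1 = a := by rw [← hf, Equiv.swap_apply_left]
      rw [map_one] at this
      exact ha this.symm
    -- Step 4: card ≠ 3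
    have hne3 : Fintype.card G ≠ 3 := by
      intro hcard
      obtain ⟨a, ha⟩ := exists_ne (1 : G)
      have horder : orderOf a = 2 := by
        have hdvd : orderOf a ∣ 2 := orderOf_dvd_of_pow_eq_one (by rw [pow_two]; exact h2 a)
        have hne1 : orderOf a ≠ 1 := fun h => ha (orderOf_eq_one_iff.mp h)
        exact (Nat.prime_two.eq_one_or_self_of_dvd _ hdvd).resolve_left hne1
      have := orderOf_dvd_card (x := a)
      rw [horder, hcard] at this
      norm_num at this
    have h4 : Fintype.card G = 4 := by
      have := Fintype.one_lt_card (α := G)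
      omega
    haveI : IsKleinFour G :=
      ⟨by rw [Nat.card_eq_fintype_card]; exact h4, exponent_eq_two_of h2⟩
    exact IsKleinFour.nonempty_mulEquiv
  · rintro ⟨e⟩
    have h2 : ∀ x : G, x * x = 1 := by
      intro x
      apply e.injective
      rw [map_mul, map_one]
      revert e
      intro _
      exact (by decide : ∀ y : Multiplicative (ZMod 2 × ZMod 2), y * y = 1) _
    have h4 : Fintype.card G = 4 := by
      rw [Fintype.card_congr e.toEquiv]
      decide
    have hexp : Monoid.exponent G = 2 := exponent_eq_two_of h2
    haveI : IsKleinFour G := ⟨by rw [Nat.card_eq_fintype_card]; exact h4, hexp⟩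
    ext σ
    simp only [Set.mem_setOf_eq, SetLike.mem_coe]
    constructor
    · rintro ⟨f, hf⟩
      exact mulEquiv_mem_graphAut f hf
    · intro hσ
      obtain ⟨a, b, ha, hb, hab⟩ := exists_two_ne_one (G := G) (by omega)
      have hσ1 : σ 1 = 1 := by
        by_contra hc
        have hadja : (enhancedPowerGraph G).Adj (σ 1) (σ a) :=
          (hσ 1 a).mpr ((adj_iff_of_exp_two h2).mpr ⟨Ne.symm ha, Or.inl rfl⟩)
        have hadjb : (enhancedPowerGraph G).Adj (σ 1) (σ b) :=
          (hσ 1 b).mpr ((adj_iff_of_exp_two h2).mpr ⟨Ne.symm hb, Or.inl rfl⟩)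
        have ha' := ((adj_iff_of_exp_two h2).mp hadja).2.resolve_left hc
        have hb' := ((adj_iff_of_exp_two h2).mp hadjb).2.resolve_left hc
        exact hab (σ.injective (ha'.trans hb'.symm))
      exact ⟨IsKleinFour.mulEquiv' σ hσ1 hexp, fun g => rfl⟩
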